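/- Let n ≥ 2 and let a, b : Fin n → ℝ be such that for all i ≠ j the vectors (a i, b i) and (a j, b j) in ℝ² are linearly independent over ℝ. Define F : (Fin n → ℝ) → ℝ × ℝ by F(x) = (∑ i, a i * (x i)², ∑ i, b i * (x i)²). Then: (a) the critical set of F is exactly the union of the coordinate axes: fderiv ℝ F x fails to be surjective if and only if at most one coordinate of x is nonzero; and (b) the set of critical values of F is the union over i of the closed half-lines {t • (a i, b i) : t ≥ 0} in ℝ². -/

import Mathlib

private lemma ldm_det_ne_zero (p q : ℝ × ℝ) (h : LinearIndependent ℝ ![p, q]) :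
    p.1 * q.2 - q.1 * p.2 ≠ 0 := by
  rw [LinearIndependent.pair_iff] at h
  intro hD
  obtain ⟨h1, h2⟩ := h q.2 (-p.2) (by ext <;> simp <;> nlinarith)
  obtain ⟨h3, h4⟩ := h (-q.1) (p.1) (by ext <;> simp <;> nlinarith)
  have := h 1 0 (by ext <;> simp <;> nlinarith)
  exact one_ne_zero this.1

private lemma ldm_fderiv_apply (n : ℕ) (a b : Fin n → ℝ) (F : (Fin n → ℝ) → ℝ × ℝ)
    (hF : ∀ x, F x = (∑ i, a i * x i ^ 2, ∑ i, b i * x i ^ 2)) (x : Fin n → ℝ) (v : Fin n → ℝ) :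
    fderiv ℝ F x v = (∑ i, a i * (2 * x i) * v i, ∑ i, b i * (2 * x i) * v i) := by
  have hp : ∀ i : Fin n, HasFDerivAt (fun y : Fin n → ℝ => y i)
      (ContinuousLinearMap.proj i : (Fin n → ℝ) →L[ℝ] ℝ) x :=
    fun i => (ContinuousLinearMap.proj i : (Fin n → ℝ) →L[ℝ] ℝ).hasFDerivAt
  have hd : HasFDerivAt F
      ((∑ i, a i • (x i • (ContinuousLinearMap.proj i : (Fin n → ℝ) →L[ℝ] ℝ)
          + x i • (ContinuousLinearMap.proj i : (Fin n → ℝ) →L[ℝ] ℝ))).prod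
       (∑ i, b i • (x i • (ContinuousLinearMap.proj i : (Fin n → ℝ) →L[ℝ] ℝ)
          + x i • (ContinuousLinearMap.proj i : (Fin n → ℝ) →L[ℝ] ℝ)))) x := by
    have hFe : F = fun x => (∑ i, a i * (x i * x i), ∑ i, b i * (x i * x i)) := by
      funext y; rw [hF]; simp [pow_two]
    rw [hFe]
    exact HasFDerivAt.prodMk (HasFDerivAt.fun_sum fun i _ => (((hp i).mul (hp i))).const_mul (a i))
      (HasFDerivAt.fun_sum fun i _ => (((hp i).mul (hp i))).const_mul (b i))
  rw [hd.fderiv]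
  simp [ContinuousLinearMap.sum_apply, mul_add]
  constructor <;> (apply Finset.sum_congr rfl; intro i _; ring)

/-- **López de Medrano's quadrics.** Let `n ≥ 2` and let
`a b : Fin n → ℝ` be such that for `i ≠ j` the vectors `(a i, b i)` and
`(a j, b j)` of `ℝ²` are linearly independent. For
`F x = (∑ i, a i * x i², ∑ i, b i * x i²)`: (a) the critical set of `F` is
exactly the union of the coordinate axes, i.e. `fderiv ℝ F x` fails to be
surjective iff at most one coordinate of `x` is nonzero; and (b) the set of
critical values of `F` is the union over `i` of the closed half-lines
`{t • (a i, b i) : t ≥ 0}`. -/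
theorem lopezDeMedrano_critical_set_and_discriminant
    (n : ℕ) (hn : 2 ≤ n) (a b : Fin n → ℝ)
    (hyp : ∀ i j : Fin n, i ≠ j →
      LinearIndependent ℝ ![((a i, b i) : ℝ × ℝ), ((a j, b j) : ℝ × ℝ)])
    (F : (Fin n → ℝ) → ℝ × ℝ)
    (hF : ∀ x, F x = (∑ i, a i * x i ^ 2, ∑ i, b i * x i ^ 2)) :
    (∀ x : Fin n → ℝ,
        ¬ Function.Surjective (fderiv ℝ F x) ↔
          ∀ j k : Fin n, x j ≠ 0 → x k ≠ 0 → j = k) ∧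
      {v : ℝ × ℝ | ∃ x : Fin n → ℝ,
          ¬ Function.Surjective (fderiv ℝ F x) ∧ F x = v} =
        ⋃ i : Fin n, (fun t : ℝ => t • ((a i, b i) : ℝ × ℝ)) '' Set.Ici 0 := by
  classical
  have hder := ldm_fderiv_apply n a b F hF
  -- nontriviality of Fin n
  have hnt : Nontrivial (Fin n) := ⟨⟨0, by omega⟩, ⟨1, by omega⟩, by simp [Fin.ext_iff]⟩
  -- each (a i, b i) ≠ 0
  have hv0 : ∀ i : Fin n, ¬(a i = 0 ∧ b i = 0) := by
    intro i hi
    obtain ⟨j, hj⟩ := exists_ne i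
    have h := hyp i j hj.symm
    rw [LinearIndependent.pair_iff] at h
    have := h 1 0 (by ext <;> simp [hi.1, hi.2])
    exact one_ne_zero this.1
  -- Part (a)
  have parta : ∀ x : Fin n → ℝ,
      ¬ Function.Surjective (fderiv ℝ F x) ↔
        ∀ j k : Fin n, x j ≠ 0 → x k ≠ 0 → j = k := by
    intro x
    constructor
    · -- not surjective → at most one nonzero coordinate
      intro hns j k hxj hxk
      by_contra hjk
      apply hns
      intro ⟨c, d⟩
      have hD := ldm_det_ne_zero _ _ (hyp j k hjk)
      simp only at hD
      set D : ℝ := a j * b k - a k * b j with hDdef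
      set t1 : ℝ := (c * b k - d * a k) / D with ht1
      set t2 : ℝ := (a j * d - b j * c) / D with ht2
      set v0 : Fin n → ℝ :=
        (Pi.single j (t1 / (2 * x j)) : Fin n → ℝ) +
          (Pi.single k (t2 / (2 * x k)) : Fin n → ℝ) with hv0def
      refine ⟨v0, ?_⟩
      rw [hder]
      have hs : ∀ w : Fin n → ℝ,
          (∑ i, w i * (2 * x i) * v0 i) = w j * t1 + w k * t2 := by
        intro w
        have : ∀ i, w i * (2 * x i) * v0 i
            = w i * (2 * x i) * (Pi.single j (t1 / (2 * x j)) : Fin n → ℝ) i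
              + w i * (2 * x i) * (Pi.single k (t2 / (2 * x k)) : Fin n → ℝ) i := by
          intro i; simp [hv0def, mul_add]
        rw [Finset.sum_congr rfl fun i _ => this i, Finset.sum_add_distrib]
        rw [Finset.sum_eq_single j (fun i _ hij => by simp [Pi.single_eq_of_ne hij]) (by simp),
            Finset.sum_eq_single k (fun i _ hik => by simp [Pi.single_eq_of_ne hik]) (by simp)]
        simp only [Pi.single_eq_same]
        field_simp
      rw [hs a, hs b]
      have : a j * t1 + a k * t2 = c ∧ b j * t1 + b k * t2 = d := by
        rw [ht1, ht2]
        constructor <;> (field_simp; ring)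
      simp [this.1, this.2]
    · -- at most one nonzero coordinate → not surjective
      intro hone hsurj
      by_cases hx0 : ∀ i, x i = 0
      · obtain ⟨v, hv⟩ := hsurj (1, 0)
        rw [hder] at hv
        simp only [hx0, mul_zero, zero_mul, Finset.sum_const_zero] at hv
        rw [Prod.ext_iff] at hv
        exact one_ne_zero hv.1.symm
      · push_neg at hx0
        obtain ⟨i0, hi0⟩ := hx0
        -- range is contained in multiples of (a i0, b i0)
        obtain ⟨v, hv⟩ := hsurj (-b i0, a i0)
        rw [hder] at hv
        have hx : ∀ i, i ≠ i0 → x i = 0 := by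
          intro i hi
          by_contra hxi
          exact hi (hone i i0 hxi hi0)
        have h1 : (∑ i, a i * (2 * x i) * v i) = a i0 * (2 * x i0) * v i0 :=
          Finset.sum_eq_single i0 (fun i _ hi => by simp [hx i hi]) (by simp)
        have h2 : (∑ i, b i * (2 * x i) * v i) = b i0 * (2 * x i0) * v i0 :=
          Finset.sum_eq_single i0 (fun i _ hi => by simp [hx i hi]) (by simp)
        rw [Prod.ext_iff] at hv
        simp only [h1, h2] at hv
        apply hv0 i0
        have ha0 : a i0 = 0 := by
          have key : a i0 * (1 + (2 * x i0 * v i0) ^ 2) = 0 := by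
            linear_combination (2 * x i0 * v i0) * hv.1 - hv.2
          have hpos : (0:ℝ) < 1 + (2 * x i0 * v i0) ^ 2 := by positivity
          exact (mul_eq_zero.mp key).resolve_right (ne_of_gt hpos)
        refine ⟨ha0, ?_⟩
        have := hv.1
        rw [ha0] at this
        simpa using this.symm
  refine ⟨parta, ?_⟩
  -- Part (b)
  ext v
  simp only [Set.mem_setOf_eq, Set.mem_iUnion, Set.mem_image, Set.mem_Ici]
  constructor
  · rintro ⟨x, hcrit, hFx⟩
    rw [parta x] at hcrit
    by_cases hx0 : ∀ i, x i = 0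
    · refine ⟨⟨0, by omega⟩, 0, le_refl 0, ?_⟩
      rw [← hFx, hF]
      simp [hx0]; rfl
    · push_neg at hx0
      obtain ⟨i0, hi0⟩ := hx0
      have hx : ∀ i, i ≠ i0 → x i = 0 := fun i hi => by
        by_contra hxi; exact hi (hcrit i i0 hxi hi0)
      refine ⟨i0, x i0 ^ 2, sq_nonneg _, ?_⟩
      rw [← hFx, hF]
      have h1 : (∑ i, a i * x i ^ 2) = a i0 * x i0 ^ 2 :=
        Finset.sum_eq_single i0 (fun i _ hi => by simp [hx i hi]) (by simp)
      have h2 : (∑ i, b i * x i ^ 2) = b i0 * x i0 ^ 2 :=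
        Finset.sum_eq_single i0 (fun i _ hi => by simp [hx i hi]) (by simp)
      rw [h1, h2]
      ext <;> simp <;> ring
  · rintro ⟨i, t, ht, rfl⟩
    refine ⟨(Pi.single i (Real.sqrt t) : Fin n → ℝ), ?_, ?_⟩
    · rw [parta]
      intro j k hj hk
      have hji : j = i := by
        by_contra hji; exact hj (Pi.single_eq_of_ne hji _)
      have hki : k = i := by
        by_contra hki; exact hk (Pi.single_eq_of_ne hki _)
      rw [hji, hki]
    · rw [hF]
      have h1 : (∑ j, a j * ((Pi.single i (Real.sqrt t) : Fin n → ℝ) j) ^ 2) = a i * t := by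
        rw [Finset.sum_eq_single i (fun j _ hj => by simp [Pi.single_eq_of_ne hj]) (by simp)]
        simp [Real.sq_sqrt ht]
      have h2 : (∑ j, b j * ((Pi.single i (Real.sqrt t) : Fin n → ℝ) j) ^ 2) = b i * t := by
        rw [Finset.sum_eq_single i (fun j _ hj => by simp [Pi.single_eq_of_ne hj]) (by simp)]
        simp [Real.sq_sqrt ht]
      rw [h1, h2]
      ext <;> simp <;> ring
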